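/- Let q be an odd prime power with q ≡ 1 (mod 4), let γ be an even positive divisor of q - 1, and set n = (q-1)/γ with n > 2 and n odd. Then for every integer l with 0 ≤ l and 2γl ≤ q - 3γ - 1 there exists a negacyclic Hermitian LCD code over F_{q²} of length n, dimension n - 2l - 1 and minimum distance exactly 2l + 2; in particular this code is MDS. -/

import Mathlib

open Finset

/-- The negacyclic shift of a word: `(c_0, ..., c_{n-1}) ↦ (-c_{n-1}, c_0, ..., c_{n-2})`. -/
def negashift {F : Type*} [Neg F] {n : ℕ} (c : Fin n → F) : Fin n → F :=
  fun i =>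
    if _h : (i : ℕ) = 0 then -c ⟨n - 1, Nat.sub_lt i.pos Nat.one_pos⟩
    else c ⟨(i : ℕ) - 1, lt_of_le_of_lt (Nat.sub_le _ _) i.isLt⟩

/-- A linear code `C ≤ F^n` is negacyclic if it is closed under the negacyclic shift. -/
def IsNegacyclic {F : Type*} [Field F] {n : ℕ} (C : Submodule F (Fin n → F)) : Prop :=
  ∀ c ∈ C, negashift c ∈ C

/-- `C` is an LCD code: `C ∩ C^⊥ = {0}` for the Euclidean inner product. -/
def IsLCD {F : Type*} [Field F] {n : ℕ} (C : Submodule F (Fin n → F)) : Prop :=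
  ∀ x ∈ C, (∀ y ∈ C, ∑ i, x i * y i = 0) → x = 0

/-- `C` is a Hermitian LCD code: `C ∩ C^{⊥H} = {0}` for the Hermitian inner product
`⟨x, y⟩ = ∑ x_i y_i^q`. -/
def IsHermLCD (q : ℕ) {F : Type*} [Field F] {n : ℕ} (C : Submodule F (Fin n → F)) : Prop :=
  ∀ x ∈ C, (∀ y ∈ C, ∑ i, x i * (y i) ^ q = 0) → x = 0

open scoped Classical in
/-- The Hamming weight of a word. -/
noncomputable def wt {F : Type*} [Zero F] {n : ℕ} (c : Fin n → F) : ℕ :=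
  (Finset.univ.filter fun i => c i ≠ 0).card

/-- The minimum distance of the code `C` is exactly `d`: `d` is the least Hamming weight
of a nonzero codeword. -/
def HasMinDist {F : Type*} [Zero F] {n : ℕ} (C : Set (Fin n → F)) (d : ℕ) : Prop :=
  IsLeast {w : ℕ | ∃ c ∈ C, c ≠ 0 ∧ wt c = w} d

lemma geom_zero' {F : Type*} [Field F] {r : F} (hr : r ≠ 1) {n : ℕ} (h : r ^ n = 1) :
    ∑ i ∈ Finset.range n, r ^ i = 0 := by
  rw [geom_sum_eq hr]; simp [h]

lemma exists_root_of_order' {E : Type*} [Field E] [Fintype E] {d : ℕ}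
    (h : d ∣ Fintype.card E - 1) : ∃ α : E, orderOf α = d := by
  classical
  obtain ⟨g, hg⟩ := IsCyclic.exists_generator (α := Eˣ)
  have hcard : orderOf g = Fintype.card E - 1 := by
    rw [orderOf_eq_card_of_forall_mem_zpowers hg, Nat.card_eq_fintype_card, Fintype.card_units]
  have hpos : 0 < Fintype.card E - 1 := by
    have : 1 < Fintype.card E := Fintype.one_lt_card
    omega
  set k := (Fintype.card E - 1) / d with hk
  have hkdvd : k ∣ Fintype.card E - 1 := Nat.div_dvd_of_dvd h
  refine ⟨((g ^ k : Eˣ) : E), ?_⟩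
  rw [orderOf_units, orderOf_pow, hcard, Nat.gcd_eq_right hkdvd, hk,
    Nat.div_div_self h (by omega)]

/-- The parity-check (evaluation) linear map of a code defined by roots `β`. -/
def phiMap {E : Type*} [Field E] (n m : ℕ) (β : Fin m → E) :
    (Fin n → E) →ₗ[E] (Fin m → E) where
  toFun := fun c t => ∑ i : Fin n, c i * β t ^ (i : ℕ)
  map_add' := by intro x y; funext t; simp [add_mul, Finset.sum_add_distrib]
  map_smul' := by intro a x; funext t; simp [Finset.mul_sum, mul_assoc]

@[simp] lemma phiMap_apply {E : Type*} [Field E] (n m : ℕ) (β : Fin m → E)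
    (c : Fin n → E) (t : Fin m) : phiMap n m β c t = ∑ i : Fin n, c i * β t ^ (i : ℕ) := rfl

lemma negashift_sum {F : Type*} [Field F] {n : ℕ} (c : Fin n → F) (β : F)
    (hβ : β ^ n = -1) :
    ∑ i : Fin n, negashift c i * β ^ (i : ℕ) = β * ∑ i : Fin n, c i * β ^ (i : ℕ) := by
  rcases n with _ | n'
  · simp
  · rw [Fin.sum_univ_succ, Fin.sum_univ_castSucc (f := fun i => c i * β ^ (i : ℕ)), mul_add]
    have h0 : negashift c 0 = -c ⟨n', by omega⟩ := by simp [negashift]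
    have hsucc : ∀ i : Fin n', negashift c i.succ = c i.castSucc := by
      intro i
      simp only [negashift, Fin.val_succ]
      rw [dif_neg (by omega)]
      congr 1
    rw [h0]
    have hlast : c (Fin.last n') * β ^ (n' : ℕ) * β = - c ⟨n', by omega⟩ := by
      rw [mul_assoc, ← pow_succ, hβ]
      simp [Fin.last]
    simp only [hsucc, Fin.val_succ, Fin.val_zero, pow_zero, mul_one, Fin.val_last,
      Fin.coe_castSucc]
    rw [Finset.mul_sum]
    have hb : β * (c (Fin.last n') * β ^ n') = -c ⟨n', by omega⟩ := by rw [← hlast]; ring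
    rw [hb, add_comm]
    congr 1
    apply Finset.sum_congr rfl
    intro i _
    ring

theorem stmt_12 (q : ℕ) (hq : IsPrimePow q) (hqodd : Odd q) (hmod : q % 4 = 1)
    (E : Type) [Field E] [Fintype E] (hE : Fintype.card E = q ^ 2)
    (γ : ℕ) (hγ : 0 < γ) (hγpar : Even γ) (hdvd : γ ∣ q - 1)
    (n : ℕ) (hn : n = (q - 1) / γ) (hn2 : 2 < n) (hnodd : Odd n)
    (l : ℕ) (hl : 2 * γ * l + 3 * γ + 1 ≤ q) :
    ∃ C : Submodule E (Fin n → E),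
      IsNegacyclic C ∧ IsHermLCD q C ∧
      Module.finrank E C = n - 2 * l - 1 ∧
      HasMinDist (C : Set (Fin n → E)) (2 * l + 2) := by
  classical
  have hq2 : 2 ≤ q := hq.two_le
  have hγn : γ * n = q - 1 := by rw [hn]; exact Nat.mul_div_cancel' hdvd
  obtain ⟨γ', rfl⟩ := hγpar
  have h2n : 2 * n ∣ q - 1 := ⟨γ', by rw [← hγn]; ring⟩
  have hm : 2 * l + 3 ≤ n := by
    have h1 : (γ' + γ') * (2 * l + 3) ≤ (γ' + γ') * n := by
      rw [hγn]
      have h2 : (γ' + γ') * (2 * l + 3) = 2 * (γ' + γ') * l + 3 * (γ' + γ') := by ring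
      omega
    exact Nat.le_of_mul_le_mul_left h1 hγ
  -- primitive 2n-th root of unity
  have hqq : q ^ 2 - 1 = (q + 1) * (q - 1) := by
    have := Nat.sq_sub_sq q 1
    simpa using this
  have h2ncard : 2 * n ∣ Fintype.card E - 1 := by
    rw [hE, hqq]
    exact h2n.mul_left (q + 1)
  obtain ⟨α, horder⟩ := exists_root_of_order' h2ncard
  have hα1 : α ^ (2 * n) = 1 := by rw [← horder]; exact pow_orderOf_eq_one α
  have hαdvd : ∀ k, α ^ k = 1 ↔ 2 * n ∣ k := by
    intro k
    rw [← horder, ← orderOf_dvd_iff_pow_eq_one]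
  have hα0 : α ≠ 0 := by
    intro h
    rw [h, zero_pow (by omega)] at hα1
    exact zero_ne_one hα1
  have hinj : ∀ a b : ℕ, a < 2 * n → b < 2 * n → α ^ a = α ^ b → a = b := by
    intro a b ha hb hab
    exact pow_injOn_Iio_orderOf (by simpa [horder] using ha) (by simpa [horder] using hb) hab
  have hαn : α ^ n = -1 := by
    have h2 : (α ^ n) * (α ^ n) = 1 := by
      rw [← pow_add, show n + n = 2 * n by ring, hα1]
    rcases mul_self_eq_one_iff.mp h2 with h | h
    · exfalso
      have h3 := (hαdvd n).mp h
      have := Nat.le_of_dvd (by omega) h3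
      omega
    · exact h
  have hαq : α ^ q = α := by
    obtain ⟨w, hw⟩ := h2n
    have h1 : α ^ (q - 1) = 1 := by
      rw [hw, pow_mul, hα1, one_pow]
    calc α ^ q = α ^ (q - 1 + 1) := by congr 1; omega
    _ = α ^ (q - 1) * α := by rw [pow_succ]
    _ = α := by rw [h1, one_mul]
  -- the defining roots
  set βf : Fin (2 * l + 1) → E := fun t => α ^ (n - 2 * l + 2 * (t : ℕ)) with hβf
  have hβodd : ∀ t : Fin (2 * l + 1), Odd (n - 2 * l + 2 * (t : ℕ)) := by
    intro t
    obtain ⟨w, hw⟩ := hnodd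
    exact ⟨w - l + (t : ℕ), by omega⟩
  have hβn : ∀ j : ℕ, Odd j → (α ^ j) ^ n = -1 := by
    intro j ⟨w, hw⟩
    calc (α ^ j) ^ n = (α ^ (2 * n)) ^ w * α ^ n := by
          rw [← pow_mul, ← pow_mul, ← pow_add]; congr 1; rw [hw]; ring
    _ = -1 := by rw [hα1, one_pow, one_mul, hαn]
  have hβinj : Function.Injective βf := by
    intro a b hab
    have := hinj _ _ (by omega) (by omega) hab
    exact Fin.ext (by omega)
  -- the code
  set C : Submodule E (Fin n → E) := LinearMap.ker (phiMap n (2 * l + 1) βf) with hC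
  have hmem : ∀ c : Fin n → E,
      c ∈ C ↔ ∀ t : Fin (2 * l + 1), ∑ i : Fin n, c i * βf t ^ (i : ℕ) = 0 := by
    intro c
    rw [hC, LinearMap.mem_ker, funext_iff]
    constructor
    · intro h t; have := h t; rwa [phiMap_apply, Pi.zero_apply] at this
    · intro h t; rw [phiMap_apply, Pi.zero_apply]; exact h t
  have hwt_eq : ∀ c : Fin n → E, wt c = (Finset.univ.filter fun i => c i ≠ 0).card := by
    intro c
    unfold wt
    congr 1
  -- the key BCH-type bound: low weight codewords vanish
  have hlow : ∀ c : Fin n → E, c ∈ C → wt c ≤ 2 * l + 1 → c = 0 := by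
    intro c hcm hwt
    have hc := (hmem c).mp hcm
    rw [hwt_eq] at hwt
    set S := (Finset.univ.filter fun i => c i ≠ 0) with hS
    set e : Fin S.card ≃ {x // x ∈ S} := S.equivFin.symm with he
    set d : Fin S.card → E :=
      fun r => c (e r) * α ^ ((n - 2 * l) * (((e r : Fin n)) : ℕ)) with hd
    set x : Fin S.card → E := fun r => α ^ (2 * (((e r : Fin n)) : ℕ)) with hx
    have hxinj : Function.Injective x := by
      intro a b hab
      have h1 := hinj _ _ (by have := ((e a : Fin n)).isLt; omega)
        (by have := ((e b : Fin n)).isLt; omega) hab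
      have h2 : (e a : Fin n) = (e b : Fin n) := Fin.ext (by omega)
      exact e.injective (Subtype.ext h2)
    have heq : ∀ r : Fin S.card, ∑ j : Fin S.card, d j * x j ^ (r : ℕ) = 0 := by
      intro r
      have hr : (r : ℕ) < 2 * l + 1 := lt_of_lt_of_le r.isLt hwt
      have h0 := hc ⟨(r : ℕ), hr⟩
      have hterm : ∀ i : Fin n, c i * (α ^ (n - 2 * l + 2 * (r : ℕ))) ^ (i : ℕ)
          = (c i * α ^ ((n - 2 * l) * (i : ℕ))) * (α ^ (2 * (i : ℕ))) ^ (r : ℕ) := by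
        intro i
        rw [← pow_mul, ← pow_mul, mul_assoc, ← pow_add]
        congr 1
        generalize n - 2 * l = a
        ring
      rw [Finset.sum_congr rfl (fun i _ => hterm i)] at h0
      have hrestrict :
          ∑ i : Fin n, (c i * α ^ ((n - 2 * l) * (i : ℕ))) * (α ^ (2 * (i : ℕ))) ^ (r : ℕ)
          = ∑ i ∈ S, (c i * α ^ ((n - 2 * l) * (i : ℕ))) * (α ^ (2 * (i : ℕ))) ^ (r : ℕ) := by
        symm
        apply Finset.sum_subset (Finset.subset_univ S)
        intro i _ hiS
        have hci : c i = 0 := by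
          by_contra hci
          exact hiS (Finset.mem_filter.mpr ⟨Finset.mem_univ i, hci⟩)
        rw [hci, zero_mul, zero_mul]
      rw [hrestrict, ← Finset.sum_coe_sort S] at h0
      rw [← Equiv.sum_comp e (fun i : {x // x ∈ S} =>
        (c i * α ^ ((n - 2 * l) * ((i : Fin n) : ℕ)))
          * (α ^ (2 * ((i : Fin n) : ℕ))) ^ (r : ℕ))] at h0
      exact h0
    have hd0 := Matrix.eq_zero_of_forall_pow_sum_mul_pow_eq_zero hxinj heq
    funext i
    by_contra hci
    have hiS : i ∈ S := Finset.mem_filter.mpr ⟨Finset.mem_univ i, hci⟩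
    have hr := congrFun hd0 (S.equivFin ⟨i, hiS⟩)
    rw [hd] at hr
    simp only [he, Equiv.symm_apply_apply] at hr
    rcases mul_eq_zero.mp hr with h | h
    · exact hci h
    · exact pow_ne_zero _ hα0 h
  refine ⟨C, ?_, ?_, ?_, ?_⟩
  · -- negacyclic
    intro c hcm
    rw [hC, LinearMap.mem_ker] at hcm ⊢
    funext t
    have h1 := congrFun hcm t
    rw [phiMap_apply, Pi.zero_apply] at h1
    rw [Pi.zero_apply, phiMap_apply, negashift_sum c (βf t) (hβn _ (hβodd t)), h1, mul_zero]
  · -- Hermitian LCD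
    intro x hxm hdual
    have hx := (hmem x).mp hxm
    have hall : ∀ r : Fin n, ∑ i : Fin n, x i * (α ^ (1 + 2 * (r : ℕ))) ^ (i : ℕ) = 0 := by
      intro r
      by_cases hcase : ∃ t : Fin (2 * l + 1), n - 2 * l + 2 * (t : ℕ) = 1 + 2 * (r : ℕ)
      · obtain ⟨t, ht⟩ := hcase
        have hxt := hx t
        simp only [hβf] at hxt
        rwa [ht] at hxt
      · set j := 1 + 2 * (r : ℕ) with hj
        have hjodd : Odd j := ⟨(r : ℕ), by omega⟩
        set y : Fin n → E := fun i => α ^ (j * (i : ℕ)) with hy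
        have hyC : y ∈ C := by
          rw [hmem]
          intro t
          have hterm : ∀ i : Fin n,
              y i * (βf t) ^ (i : ℕ) = (α ^ (j + (n - 2 * l + 2 * (t : ℕ)))) ^ (i : ℕ) := by
            intro i
            rw [hy, hβf, ← pow_mul, ← pow_mul, ← pow_add]
            congr 1
            ring
          rw [Finset.sum_congr rfl (fun i _ => hterm i)]
          rw [Fin.sum_univ_eq_sum_range (fun i => (α ^ (j + (n - 2 * l + 2 * (t : ℕ)))) ^ i) n]
          apply geom_zero'
          · intro h1
            have hdvd2 := (hαdvd (j + (n - 2 * l + 2 * (t : ℕ)))).mp h1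
            have hjk : j + (n - 2 * l + 2 * (t : ℕ)) = 2 * n := by
              rcases hdvd2 with ⟨w, hw⟩
              rcases w with _ | _ | w
              · omega
              · omega
              · exfalso
                have hge : 2 * n * 2 ≤ 2 * n * (w + 1 + 1) := Nat.mul_le_mul_left _ (by omega)
                omega
            exact hcase ⟨⟨2 * l - (t : ℕ), by omega⟩, by simp; omega⟩
          · have hkodd : Odd (n - 2 * l + 2 * (t : ℕ)) := hβodd t
            obtain ⟨a, ha⟩ := hjodd
            obtain ⟨b, hb⟩ := hkodd
            rw [← pow_mul]
            have hexp : (j + (n - 2 * l + 2 * (t : ℕ))) * n = 2 * n * (a + b + 1) := by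
              rw [ha, hb]; ring
            rw [hexp, pow_mul, hα1, one_pow]
        have h0 := hdual y hyC
        have hyq : ∀ i : Fin n, (y i) ^ q = y i := by
          intro i
          rw [hy]
          have hcomm : (α ^ (j * (i : ℕ))) ^ q = (α ^ q) ^ (j * (i : ℕ)) := by
            rw [← pow_mul, ← pow_mul, mul_comm]
          rw [hcomm, hαq]
        rw [Finset.sum_congr rfl (fun i _ => by rw [hyq i])] at h0
        have hterm2 : ∀ i : Fin n, x i * y i = x i * (α ^ j) ^ (i : ℕ) := by
          intro i; rw [hy, ← pow_mul]
        rw [Finset.sum_congr rfl (fun i _ => hterm2 i)] at h0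
        exact h0
    have hnodes : Function.Injective (fun i : Fin n => α ^ (2 * (i : ℕ))) := by
      intro a b hab
      have := hinj _ _ (by omega) (by omega) hab
      exact Fin.ext (by omega)
    have heq : ∀ r : Fin n,
        ∑ i : Fin n, (x i * α ^ (i : ℕ)) * (α ^ (2 * (i : ℕ))) ^ (r : ℕ) = 0 := by
      intro r
      have h0 := hall r
      rw [Finset.sum_congr rfl (fun i _ => ?_)] at h0
      · exact h0
      · rw [← pow_mul, ← pow_mul, mul_assoc, ← pow_add]
        congr 2
        ring
    have hz := Matrix.eq_zero_of_forall_pow_sum_mul_pow_eq_zero hnodes heq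
    funext i
    have hzi := congrFun hz i
    rcases mul_eq_zero.mp hzi with h | h
    · exact h
    · exact absurd h (pow_ne_zero _ hα0)
  · -- dimension
    have hmn : 2 * l + 1 ≤ n := by omega
    have hsurj : Function.Surjective (phiMap n (2 * l + 1) βf) := by
      intro v
      set M := Matrix.vandermonde βf with hM
      have hdet : M.det ≠ 0 := Matrix.det_vandermonde_ne_zero_iff.mpr hβinj
      set u := M⁻¹.mulVec v with hu
      refine ⟨fun i => if h : (i : ℕ) < 2 * l + 1 then u ⟨i, h⟩ else 0, ?_⟩
      funext t
      rw [phiMap_apply]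
      have hsum : ∑ i : Fin n, (if h : (i : ℕ) < 2 * l + 1 then u ⟨i, h⟩ else 0) * βf t ^ (i : ℕ)
          = ∑ s : Fin (2 * l + 1), u s * βf t ^ (s : ℕ) := by
        rw [← Finset.sum_subset (Finset.subset_univ ((univ : Finset (Fin (2 * l + 1))).map
          (Fin.castLEEmb hmn)))]
        · rw [Finset.sum_map]
          apply Finset.sum_congr rfl
          intro s _
          simp [Fin.castLEEmb, Fin.castLE, s.isLt]
        · intro i _ hi
          rw [dif_neg, zero_mul]
          intro hlt
          exact hi (Finset.mem_map.mpr ⟨⟨(i : ℕ), hlt⟩, Finset.mem_univ _, Fin.ext rfl⟩)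
      rw [hsum]
      have hMu : M.mulVec u = v := by
        rw [hu, Matrix.mulVec_mulVec, Matrix.mul_nonsing_inv _ (isUnit_iff_ne_zero.mpr hdet),
          Matrix.one_mulVec]
      have hMut := congrFun hMu t
      rw [← hMut]
      simp [Matrix.mulVec, dotProduct, hM, Matrix.vandermonde, mul_comm]
    have hrk := LinearMap.finrank_range_add_finrank_ker (phiMap n (2 * l + 1) βf)
    rw [LinearMap.range_eq_top.mpr hsurj, finrank_top] at hrk
    simp only [Module.finrank_fintype_fun_eq_card, Fintype.card_fin] at hrk
    rw [hC]
    omega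
  · -- minimum distance
    set g : Polynomial E := ∏ t : Fin (2 * l + 1), (Polynomial.X - Polynomial.C (βf t)) with hg
    have hgmonic : g.Monic :=
      Polynomial.monic_prod_of_monic _ _ (fun t _ => Polynomial.monic_X_sub_C _)
    have hgdeg : g.natDegree = 2 * l + 1 := by
      rw [hg, Polynomial.natDegree_prod _ _ (fun t _ => Polynomial.X_sub_C_ne_zero _)]
      simp [Polynomial.natDegree_X_sub_C]
    set cw : Fin n → E := fun i => g.coeff (i : ℕ) with hcw
    have hcwC : cw ∈ C := by
      rw [hmem]
      intro t
      have heval := Polynomial.eval_eq_sum_range' (show g.natDegree < n by omega) (βf t)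
      rw [Fin.sum_univ_eq_sum_range (fun i => g.coeff i * βf t ^ i) n, ← heval]
      rw [hg, Polynomial.eval_prod]
      apply Finset.prod_eq_zero (Finset.mem_univ t)
      simp
    have hcwne : cw ≠ 0 := by
      intro h
      have h1 := congrFun h ⟨2 * l + 1, by omega⟩
      rw [hcw] at h1
      simp only [Pi.zero_apply] at h1
      rw [← hgdeg, hgmonic.coeff_natDegree] at h1
      exact one_ne_zero h1
    have hwtle : wt cw ≤ 2 * l + 2 := by
      rw [hwt_eq]
      have hsub : (Finset.univ.filter fun i => cw i ≠ 0) ⊆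
          (univ : Finset (Fin (2 * l + 2))).map (Fin.castLEEmb (by omega)) := by
        intro i hi
        have hci : cw i ≠ 0 := (Finset.mem_filter.mp hi).2
        have hle : (i : ℕ) ≤ g.natDegree := Polynomial.le_natDegree_of_ne_zero hci
        rw [hgdeg] at hle
        exact Finset.mem_map.mpr ⟨⟨(i : ℕ), by omega⟩, Finset.mem_univ _, Fin.ext rfl⟩
      calc (Finset.univ.filter fun i => cw i ≠ 0).card
          ≤ ((univ : Finset (Fin (2 * l + 2))).map (Fin.castLEEmb (by omega))).card :=
            Finset.card_le_card hsub
        _ = 2 * l + 2 := by rw [Finset.card_map]; simp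
    have hwtge : 2 * l + 2 ≤ wt cw := by
      by_contra h
      exact hcwne (hlow cw hcwC (by omega))
    constructor
    · exact ⟨cw, hcwC, hcwne, by omega⟩
    · rintro w ⟨c', hc', hne, rfl⟩
      by_contra hlt
      exact hne (hlow c' hc' (by omega))
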